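/- Let q be a prime power. The number of pairs (a, b) ∈ F_{q^2} × F_{q^2} satisfying b^q + b = a^{q+1} is exactly q^3. -/

import Mathlib

open Polynomial

section aux

variable {F : Type} [Field F] [Fintype F]

lemma ncard_isRoot_le (P : F[X]) (hP : P ≠ 0) : {x : F | P.IsRoot x}.ncard ≤ P.natDegree := by
  classical
  have hsub : {x : F | P.IsRoot x} ⊆ (P.roots.toFinset : Set F) := by
    intro x hx
    simp only [Finset.coe_sort_coe, Multiset.mem_toFinset, Finset.mem_coe, mem_roots, hP,
      ne_eq, not_false_iff, true_and]
    exact hx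
  calc {x : F | P.IsRoot x}.ncard ≤ ((P.roots.toFinset : Set F)).ncard :=
        Set.ncard_le_ncard hsub (Set.toFinite _)
    _ = P.roots.toFinset.card := Set.ncard_coe_finset _
    _ ≤ Multiset.card P.roots := Multiset.toFinset_card_le _
    _ ≤ P.natDegree := P.card_roots'

/-- The Artin–Schreier-type additive map `x ↦ x^q + x`. -/
noncomputable def hermMap (p n : ℕ) (F : Type) [Field F] [Fact p.Prime] [CharP F p] :
    F →+ F where
  toFun x := x ^ p ^ n + x
  map_zero' := by
    rw [zero_pow (pow_ne_zero n (Fact.out : p.Prime).pos.ne'), zero_add]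
  map_add' x y := by
    rw [add_pow_char_pow]
    ring

omit [Fintype F] in
lemma natDegree_herm_poly (p n : ℕ) (hq : 1 < p ^ n) :
    ((X : F[X]) ^ p ^ n + X).natDegree = p ^ n := by
  have h1 : ((X : F[X])).natDegree < ((X : F[X]) ^ p ^ n).natDegree := by
    simpa [natDegree_X_pow, natDegree_X] using hq
  rw [natDegree_add_eq_left_of_natDegree_lt h1, natDegree_X_pow]

lemma card_ker_le (p n : ℕ) [Fact p.Prime] (F : Type) [Field F] [Fintype F] [CharP F p]
    (hn : 0 < n) : Nat.card (hermMap p n F).ker ≤ p ^ n := by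
  have hq : 1 < p ^ n := Nat.one_lt_pow hn.ne' (Fact.out : p.Prime).one_lt
  set P : F[X] := X ^ p ^ n + X with hP
  have hdeg : P.natDegree = p ^ n := natDegree_herm_poly p n hq
  have hP0 : P ≠ 0 := by
    intro h
    rw [← hdeg, h, natDegree_zero] at hq
    exact absurd hq (by norm_num)
  have hsub : ((hermMap p n F).ker : Set F) ⊆ {x : F | P.IsRoot x} := by
    intro x hx
    have hx' : x ^ p ^ n + x = 0 := hx
    simp [hP, IsRoot, hx']
  calc Nat.card (hermMap p n F).ker = ((hermMap p n F).ker : Set F).ncard :=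
        Nat.card_coe_set_eq _
    _ ≤ {x : F | P.IsRoot x}.ncard := Set.ncard_le_ncard hsub (Polynomial.finite_setOf_isRoot hP0)
    _ ≤ p ^ n := hdeg ▸ ncard_isRoot_le P hP0

lemma card_fixed_le (p n : ℕ) [Fact p.Prime] (F : Type) [Field F] [Fintype F]
    (hn : 0 < n) : {x : F | x ^ p ^ n = x}.ncard ≤ p ^ n := by
  have hq : 1 < p ^ n := Nat.one_lt_pow hn.ne' (Fact.out : p.Prime).one_lt
  set P : F[X] := X ^ p ^ n - X with hP
  have hdeg : P.natDegree = p ^ n := by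
    have h1 : ((X : F[X])).natDegree < ((X : F[X]) ^ p ^ n).natDegree := by
      simpa [natDegree_X_pow, natDegree_X] using hq
    rw [hP, natDegree_sub_eq_left_of_natDegree_lt h1, natDegree_X_pow]
  have hP0 : P ≠ 0 := by
    intro h
    rw [← hdeg, h, natDegree_zero] at hq
    exact absurd hq (by norm_num)
  have hsub : {x : F | x ^ p ^ n = x} ⊆ {x : F | P.IsRoot x} := by
    intro x hx
    simp only [Set.mem_setOf_eq] at hx
    simp [hP, IsRoot, hx]
  calc {x : F | x ^ p ^ n = x}.ncard ≤ {x : F | P.IsRoot x}.ncard :=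
        Set.ncard_le_ncard hsub (Polynomial.finite_setOf_isRoot hP0)
    _ ≤ p ^ n := hdeg ▸ ncard_isRoot_le P hP0

lemma range_subset (p n : ℕ) [Fact p.Prime] (F : Type) [Field F] [Fintype F] [CharP F p]
    (hF : Fintype.card F = (p ^ n) ^ 2) :
    ((hermMap p n F).range : Set F) ⊆ {x : F | x ^ p ^ n = x} := by
  rintro _ ⟨x, rfl⟩
  show (x ^ p ^ n + x) ^ p ^ n = x ^ p ^ n + x
  rw [add_pow_char_pow, ← pow_mul, ← pow_two, ← hF, FiniteField.pow_card, add_comm]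

lemma card_ker_and_range (p n : ℕ) [Fact p.Prime] (F : Type) [Field F] [Fintype F] [CharP F p]
    (hn : 0 < n) (hF : Fintype.card F = (p ^ n) ^ 2) :
    Nat.card (hermMap p n F).ker = p ^ n ∧ Nat.card (hermMap p n F).range = p ^ n := by
  have hq : 0 < p ^ n := pow_pos (Fact.out : p.Prime).pos n
  have hprod : Nat.card (hermMap p n F).range * Nat.card (hermMap p n F).ker = (p ^ n) ^ 2 := by
    rw [← Nat.card_congr (QuotientAddGroup.quotientKerEquivRange (hermMap p n F)).toEquiv,
      ← AddSubgroup.card_eq_card_quotient_mul_card_addSubgroup, ← hF, Nat.card_eq_fintype_card]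
  have hker : Nat.card (hermMap p n F).ker ≤ p ^ n := card_ker_le p n F hn
  have hrange : Nat.card (hermMap p n F).range ≤ p ^ n := by
    calc Nat.card (hermMap p n F).range = ((hermMap p n F).range : Set F).ncard :=
          Nat.card_coe_set_eq _
      _ ≤ {x : F | x ^ p ^ n = x}.ncard :=
          Set.ncard_le_ncard (range_subset p n F hF) (Set.toFinite _)
      _ ≤ p ^ n := card_fixed_le p n F hn
  constructor
  · nlinarith [hker, hrange, hprod]
  · nlinarith [hker, hrange, hprod]

lemma card_fiber (p n : ℕ) [Fact p.Prime] (F : Type) [Field F] [Fintype F] [CharP F p]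
    (hn : 0 < n) (hF : Fintype.card F = (p ^ n) ^ 2) (c : F) (hc : c ^ p ^ n = c) :
    Nat.card {b : F // b ^ p ^ n + b = c} = p ^ n := by
  obtain ⟨hker, hrange⟩ := card_ker_and_range p n F hn hF
  -- c is in the range
  have hrange_eq : ((hermMap p n F).range : Set F) = {x : F | x ^ p ^ n = x} := by
    have h2 : ((hermMap p n F).range : Set F).ncard = p ^ n := by
      rw [← Nat.card_coe_set_eq]; exact hrange
    refine Set.eq_of_subset_of_ncard_le (range_subset p n F hF) ?_ (Set.toFinite _)
    rw [h2]; exact card_fixed_le p n F hn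
  have hcmem : c ∈ (hermMap p n F).range := by
    rw [← AddSubgroup.mem_carrier]
    show c ∈ ((hermMap p n F).range : Set F)
    rw [hrange_eq]; exact hc
  obtain ⟨b₀, hb₀⟩ := hcmem
  -- fiber equiv kernel
  have e : {b : F // b ^ p ^ n + b = c} ≃ (hermMap p n F).ker := by
    refine ⟨fun b => ⟨b.1 - b₀, ?_⟩, fun k => ⟨k.1 + b₀, ?_⟩, ?_, ?_⟩
    · rw [AddMonoidHom.mem_ker, map_sub, hb₀]
      have : hermMap p n F b.1 = c := b.2
      rw [this, sub_self]
    · have hk : hermMap p n F k.1 = 0 := k.2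
      have : hermMap p n F (k.1 + b₀) = c := by rw [map_add, hk, hb₀, zero_add]
      exact this
    · intro b; ext; simp
    · intro k; ext; simp
  rw [Nat.card_congr e, hker]

end aux

/-- The Hermitian curve `b^q + b = a^{q+1}` has exactly `q³` affine points over `F_{q²}`. -/
theorem stmt5 (p n q : ℕ) (hp : p.Prime) (hn : 0 < n) (hq : q = p ^ n)
    (F : Type) [Field F] [Fintype F] (hF : Fintype.card F = q ^ 2) :
    Nat.card {ab : F × F // ab.2 ^ q + ab.2 = ab.1 ^ (q + 1)} = q ^ 3 := by
  classical
  have hpfact : Fact p.Prime := ⟨hp⟩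
  subst hq
  -- characteristic of F is p
  have hchar : CharP F p := by
    obtain ⟨m, hrprime, hcard⟩ := FiniteField.card F (ringChar F)
    have key : ringChar F ^ (m : ℕ) = (p ^ n) ^ 2 := by rw [← hcard, hF]
    have h1 : p ∣ ringChar F ^ (m : ℕ) := by
      rw [key]
      exact dvd_pow (dvd_pow_self p hn.ne') two_ne_zero
    have h2 : p = ringChar F :=
      (Nat.prime_dvd_prime_iff_eq hp hrprime).mp (hp.dvd_of_dvd_pow h1)
    rw [h2]
    exact ringChar.charP F
  -- the pairs set as a sigma type
  have e : {ab : F × F // ab.2 ^ p ^ n + ab.2 = ab.1 ^ (p ^ n + 1)} ≃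
      Σ a : F, {b : F // b ^ p ^ n + b = a ^ (p ^ n + 1)} :=
    Equiv.subtypeProdEquivSigmaSubtype (fun a b => b ^ p ^ n + b = a ^ (p ^ n + 1))
  rw [Nat.card_congr e, Nat.card_eq_fintype_card, Fintype.card_sigma]
  have hfix : ∀ a : F, (a ^ (p ^ n + 1)) ^ p ^ n = a ^ (p ^ n + 1) := by
    intro a
    have hca : a ^ ((p ^ n) ^ 2) = a := by rw [← hF]; exact FiniteField.pow_card a
    have hmul : (p ^ n + 1) * p ^ n = (p ^ n) ^ 2 + p ^ n := by ring
    rw [← pow_mul, hmul, pow_add, hca, pow_succ']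
  have hcard : ∀ a : F, Fintype.card {b : F // b ^ p ^ n + b = a ^ (p ^ n + 1)} = p ^ n := by
    intro a
    rw [← Nat.card_eq_fintype_card]
    exact card_fiber p n F hn hF _ (hfix a)
  simp only [hcard, Finset.sum_const, smul_eq_mul, Finset.card_univ, hF]
  ring
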